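/- arXiv:2002.11184 — 3 statements merged into one kernel-verified Lean document; each statement's English description precedes it below -/
import Mathlib

section
/- Let k ≥ 2, let t_1 < t_2 < ... < t_k be real sample times, and let a_2, ..., a_k be attachment times with a_j ≤ t_{j-1} for all j. Define the lineage count functions ℓ_j recursively by ℓ_1(t) = 1 for t < t_1 and 0 otherwise, and ℓ_{j+1}(t) = ℓ_j(t) + 1 for a_{j+1} ≤ t < t_{j+1} and ℓ_{j+1}(t) = ℓ_j(t) otherwise. Then ∑_{j=2}^k ∫_{a_j}^{∞} ℓ_{j-1}(t) dt = ∫_{-∞}^{∞} C(ℓ_k(t), 2) dt. -/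
open MeasureTheory

/-- The sum of sequential-attachment integrals equals the coalescent-rate
integral: `∑_{j=2}^k ∫_{a_j}^∞ ℓ_{j-1}(t) dt = ∫_{-∞}^∞ C(ℓ_k(t),2) dt`. -/
theorem lineage_count_sum (k : ℕ) (hk : 2 ≤ k)
    (t a : ℕ → ℝ) (ℓ : ℕ → ℝ → ℕ)
    (ht : ∀ i j, 1 ≤ i → i < j → j ≤ k → t i < t j)
    (ha : ∀ j, 2 ≤ j → j ≤ k → a j ≤ t (j - 1))
    (hℓ1 : ∀ s, ℓ 1 s = if s < t 1 then 1 else 0)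
    (hℓsucc : ∀ j, 1 ≤ j → j < k → ∀ s,
      ℓ (j + 1) s = if a (j + 1) ≤ s ∧ s < t (j + 1) then ℓ j s + 1 else ℓ j s)
    (hint : ∀ j, 1 ≤ j → j ≤ k → Integrable (fun s => ((ℓ j s).choose 2 : ℝ)))
    (hintl : ∀ j, 1 ≤ j → j ≤ k →
      IntegrableOn (fun s => (ℓ j s : ℝ)) (Set.Ici (a (j + 1)))) :
    (∑ j ∈ Finset.Icc 2 k, ∫ s in Set.Ici (a j), (ℓ (j - 1) s : ℝ)) =
      ∫ s, ((ℓ k s).choose 2 : ℝ) := by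
  -- ℓ j vanishes above t j
  have hzero : ∀ j, 1 ≤ j → j ≤ k → ∀ s, t j ≤ s → ℓ j s = 0 := by
    intro j
    induction j with
    | zero => omega
    | succ n ih =>
      intro h1 h2 s hs
      rcases Nat.eq_or_lt_of_le h1 with h | h
      · rw [show n + 1 = 1 by omega, hℓ1, if_neg]
        · rw [show n + 1 = 1 by omega] at hs; linarith
      · have hn1 : 1 ≤ n := by omega
        have hnk : n < k := by omega
        rw [hℓsucc n hn1 hnk s, if_neg]
        · exact ih hn1 (le_of_lt hnk) s
            (le_trans (le_of_lt (ht n (n + 1) hn1 (by omega) h2)) hs)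
        · rintro ⟨-, h3⟩; linarith
  set F : ℕ → ℝ := fun j => ∫ s, ((ℓ j s).choose 2 : ℝ) with hF
  -- each term is a difference
  have hstep : ∀ j, 1 ≤ j → j < k →
      (∫ s in Set.Ici (a (j + 1)), (ℓ j s : ℝ)) = F (j + 1) - F j := by
    intro j h1 h2
    have hpt : ∀ s, Set.indicator (Set.Ici (a (j + 1))) (fun s => (ℓ j s : ℝ)) s
        = ((ℓ (j + 1) s).choose 2 : ℝ) - ((ℓ j s).choose 2 : ℝ) := by
      intro s
      by_cases hm : s ∈ Set.Ici (a (j + 1))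
      · rw [Set.indicator_of_mem hm]
        by_cases hts : s < t (j + 1)
        · rw [hℓsucc j h1 h2 s, if_pos ⟨hm, hts⟩]
          rw [show ℓ j s + 1 = ℓ j s + 1 from rfl, Nat.choose_succ_succ' (ℓ j s) 1]
          push_cast [Nat.choose_one_right]
          ring
        · have hz : ℓ j s = 0 := by
            refine hzero j h1 (le_of_lt h2) s ?_
            exact le_trans (le_of_lt (ht j (j + 1) h1 (by omega) h2)) (not_lt.1 hts)
          rw [hℓsucc j h1 h2 s, if_neg (by rintro ⟨-, h3⟩; exact hts h3), hz]
          simp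
      · rw [Set.indicator_of_notMem hm]
        rw [hℓsucc j h1 h2 s, if_neg (by rintro ⟨h3, -⟩; exact hm h3)]
        ring
    rw [← integral_indicator measurableSet_Ici]
    calc (∫ s, Set.indicator (Set.Ici (a (j + 1))) (fun s => (ℓ j s : ℝ)) s)
        = ∫ s, (((ℓ (j + 1) s).choose 2 : ℝ) - ((ℓ j s).choose 2 : ℝ)) := by
          exact integral_congr_ae (Filter.Eventually.of_forall hpt)
      _ = F (j + 1) - F j :=
          integral_sub (hint (j + 1) (by omega) h2) (hint j h1 (le_of_lt h2))
  have hF1 : F 1 = 0 := by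
    have : ∀ s, ((ℓ 1 s).choose 2 : ℝ) = 0 := by
      intro s; rw [hℓ1 s]; split <;> simp
    simp only [hF]
    rw [integral_congr_ae (Filter.Eventually.of_forall this), integral_zero]
  -- telescoping
  have hsum : (∑ j ∈ Finset.Icc 2 k, ∫ s in Set.Ici (a j), (ℓ (j - 1) s : ℝ))
      = ∑ i ∈ Finset.range (k - 1), (F (i + 2) - F (i + 1)) := by
    rw [← Finset.Ico_add_one_right_eq_Icc, Finset.sum_Ico_eq_sum_range]
    refine Finset.sum_congr rfl ?_
    intro i hi
    simp only [Finset.mem_range] at hi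
    have : 2 + i - 1 = i + 1 := by omega
    rw [this, show 2 + i = (i + 1) + 1 by omega]
    exact hstep (i + 1) (by omega) (by omega)
  rw [hsum]
  have := Finset.sum_range_sub (fun i => F (i + 1)) (k - 1)
  rw [show (∑ i ∈ Finset.range (k - 1), (F (i + 2) - F (i + 1)))
      = ∑ i ∈ Finset.range (k - 1), (F (i + 1 + 1) - F (i + 1)) by norm_num, this,
    show k - 1 + 1 = k by omega, hF1, sub_zero]
end

section
/- For m ≥ 1, the exponential densities p_m(s) = C(m+1,2)·e^{−C(m+1,2)s} and p_{m+1}(s) = C(m+2,2)·e^{−C(m+2,2)s} with convolution Q_m(s) = ∫_0^s p_m(t)p_{m+1}(s−t)dt satisfy the stationarity equation p_{m+1}(s) + (2/m)·Q_m(s) − (1 + 2/m)·p_m(s) = 0 for all s ≥ 0 if and only if this holds with the explicit formula Q_m(s) = C(m+1,2)C(m+2,2)(e^{−C(m+1,2)s} − e^{−C(m+2,2)s})/(m+1); verify that it does hold for all s ≥ 0. -/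
open Real intervalIntegral

lemma integral_exp_const_mul (c s : ℝ) (hc : c ≠ 0) :
    (∫ t in (0:ℝ)..s, Real.exp (c * t)) = (Real.exp (c * s) - 1) / c := by
  rw [intervalIntegral.integral_comp_mul_left (fun x => Real.exp x) hc, integral_exp]
  simp [smul_eq_mul]
  ring

/-- The marginal stationarity equation
`p_{m+1}(s) + (2/m)Q_m(s) − (1+2/m)p_m(s) = 0` holds for all `s ≥ 0`, where
`Q_m` is the convolution of `p_m` and `p_{m+1}`. -/
theorem stationarity_equation (m : ℕ) (hm : 1 ≤ m) (s : ℝ) (hs : 0 ≤ s) :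
    (((m + 2).choose 2 : ℝ) * Real.exp (-((m + 2).choose 2 : ℝ) * s)) +
      (2 / (m : ℝ)) *
        (∫ t in (0:ℝ)..s,
          (((m + 1).choose 2 : ℝ) * Real.exp (-((m + 1).choose 2 : ℝ) * t)) *
          (((m + 2).choose 2 : ℝ) * Real.exp (-((m + 2).choose 2 : ℝ) * (s - t)))) -
      (1 + 2 / (m : ℝ)) *
        (((m + 1).choose 2 : ℝ) * Real.exp (-((m + 1).choose 2 : ℝ) * s)) = 0 := by
  have hm0 : (m : ℝ) ≠ 0 := by positivity
  have hm1 : (m : ℝ) + 1 ≠ 0 := by positivity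
  set a : ℝ := ((m + 1).choose 2 : ℝ) with ha
  set b : ℝ := ((m + 2).choose 2 : ℝ) with hb
  have hav : a = (m : ℝ) * (m + 1) / 2 := by
    rw [ha, Nat.cast_choose_two]; push_cast; ring
  have hbv : b = ((m : ℝ) + 1) * (m + 2) / 2 := by
    rw [hb, Nat.cast_choose_two]; push_cast; ring
  have hba : b - a = (m : ℝ) + 1 := by rw [hav, hbv]; ring
  have hI : (∫ t in (0:ℝ)..s,
      (a * Real.exp (-a * t)) * (b * Real.exp (-b * (s - t))))
      = a * b * Real.exp (-b * s) * ((Real.exp ((b - a) * s) - 1) / (b - a)) := by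
    have : (fun t : ℝ => (a * Real.exp (-a * t)) * (b * Real.exp (-b * (s - t))))
        = fun t : ℝ => (a * b * Real.exp (-b * s)) * Real.exp ((b - a) * t) := by
      funext t
      rw [mul_assoc (a * b), ← Real.exp_add,
        show -b * s + (b - a) * t = -a * t + -b * (s - t) by ring, Real.exp_add]
      ring
    rw [this, intervalIntegral.integral_const_mul,
      integral_exp_const_mul _ _ (by rw [hba]; positivity)]
  rw [hI, hba]
  have hE : Real.exp (-b * s) * Real.exp (((m:ℝ) + 1) * s) = Real.exp (-a * s) := by
    rw [← Real.exp_add]; congr 1; rw [show ((m:ℝ)+1) = b - a from hba.symm]; ring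
  have h2m : (2:ℝ) / m * (a * b / ((m:ℝ) + 1)) = b := by
    rw [hav, hbv]; field_simp
  have h1 : (1 + 2 / (m:ℝ)) * a = b := by
    rw [hav, hbv]; field_simp
  linear_combination (Real.exp (-b * s) * (Real.exp (((m:ℝ) + 1) * s) - 1)) * h2m -
    Real.exp (-a * s) * h1 + b * hE
end

section
/- Suppose p_m satisfies the equation p_{m+1}(s) + (2/m)Q_m(s) − (1+2/m)p_m(s) = 0 for s > 0, where Q_m(s) = ∫_0^s p_m(t)p_{m+1}(s−t)dt, p_{m+1}(s) = C(m+2,2)e^{−C(m+2,2)s}, and p_m is continuously differentiable with p_m(0) finite. Then p_m satisfies p_m'(s) + C(m+1,2)·p_m(s) = 0 for s > 0, and hence p_m(s) = p_m(0)·e^{−C(m+1,2)·s}. -/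
open Real intervalIntegral

/-- If `p_m` is C¹ and satisfies the stationarity equation with the explicit
exponential `p_{m+1}` and convolution `Q_m`, then `p_m' + C(m+1,2)p_m = 0` on
`(0,∞)`, hence `p_m(s) = p_m(0)e^{−C(m+1,2)s}`. -/
theorem stationarity_forces_exponential (m : ℕ) (hm : 1 ≤ m) (p : ℝ → ℝ)
    (hp : ContDiff ℝ 1 p)
    (heq : ∀ s : ℝ, 0 < s →
      (((m + 2).choose 2 : ℝ) * Real.exp (-((m + 2).choose 2 : ℝ) * s)) +
        (2 / (m : ℝ)) *
          (∫ t in (0:ℝ)..s,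
            p t * (((m + 2).choose 2 : ℝ) * Real.exp (-((m + 2).choose 2 : ℝ) * (s - t)))) -
        (1 + 2 / (m : ℝ)) * p s = 0) :
    (∀ s : ℝ, 0 < s → deriv p s + ((m + 1).choose 2 : ℝ) * p s = 0) ∧
    (∀ s : ℝ, 0 ≤ s → p s = p 0 * Real.exp (-((m + 1).choose 2 : ℝ) * s)) := by
  have hpc : Continuous p := hp.continuous
  have hm0 : (m : ℝ) ≠ 0 := by positivity
  set c : ℝ := ((m + 2).choose 2 : ℝ) with hc
  set a : ℝ := 2 / (m : ℝ) with ha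
  set b : ℝ := 1 + 2 / (m : ℝ) with hb
  have hcval : c = ((m : ℝ) + 2) * ((m : ℝ) + 1) / 2 := by
    rw [hc, Nat.cast_choose_two]; push_cast; ring
  have hCval : (((m + 1).choose 2 : ℕ) : ℝ) = (m : ℝ) * ((m : ℝ) + 1) / 2 := by
    rw [Nat.cast_choose_two]; push_cast; ring
  have hbne : b ≠ 0 := by
    rw [hb]; positivity
  -- the inner function F
  set F : ℝ → ℝ := fun s => ∫ t in (0:ℝ)..s, p t * Real.exp (c * t) with hF
  have hFc : Continuous fun t => p t * Real.exp (c * t) := by continuity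
  have hFd : ∀ s : ℝ, HasDerivAt F (p s * Real.exp (c * s)) s := fun s =>
    (hFc.integral_hasStrictDerivAt 0 s).hasDerivAt
  set g : ℝ → ℝ := fun s => (c / b) * (Real.exp (-c * s) * (1 + a * F s)) with hg
  -- p = g on (0, ∞)
  have hpg : ∀ x : ℝ, 0 < x → p x = g x := by
    intro x hx
    have h1 := heq x hx
    have h2 : (∫ t in (0:ℝ)..x, p t * (c * Real.exp (-c * (x - t))))
        = c * Real.exp (-c * x) * F x := by
      rw [hF]
      rw [← intervalIntegral.integral_const_mul]
      apply intervalIntegral.integral_congr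
      intro t _
      show p t * (c * Real.exp (-c * (x - t))) = c * Real.exp (-c * x) * (p t * Real.exp (c * t))
      have : Real.exp (-c * (x - t)) = Real.exp (-c * x) * Real.exp (c * t) := by
        rw [← Real.exp_add]; ring_nf
      rw [this]; ring
    rw [h2] at h1
    rw [hg]
    have hbp : b * p x = c * Real.exp (-c * x) + a * (c * Real.exp (-c * x) * F x) := by
      linarith
    calc p x = (b * p x) / b := by field_simp
      _ = (c * Real.exp (-c * x) + a * (c * Real.exp (-c * x) * F x)) / b := by rw [hbp]
      _ = c / b * (Real.exp (-c * x) * (1 + a * F x)) := by ring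
  -- derivative of g
  have hgd : ∀ s : ℝ, HasDerivAt g
      ((c / b) * ((Real.exp (-c * s) * (-c)) * (1 + a * F s)
        + Real.exp (-c * s) * (a * (p s * Real.exp (c * s))))) s := by
    intro s
    have hE : HasDerivAt (fun s : ℝ => Real.exp (-c * s)) (Real.exp (-c * s) * (-c)) s := by
      have := ((hasDerivAt_id s).const_mul (-c)).exp
      simpa [mul_comm] using this
    have hG : HasDerivAt (fun s => 1 + a * F s) (a * (p s * Real.exp (c * s))) s :=
      ((hFd s).const_mul a).const_add 1
    exact ((hE.mul hG).const_mul (c / b))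
  -- the ODE
  have hODE : ∀ s : ℝ, 0 < s → deriv p s + ((m + 1).choose 2 : ℝ) * p s = 0 := by
    intro s hs
    have hev : p =ᶠ[nhds s] g := by
      filter_upwards [IsOpen.mem_nhds isOpen_Ioi hs] with x hx
      exact hpg x hx
    have hpd : HasDerivAt p
        ((c / b) * ((Real.exp (-c * s) * (-c)) * (1 + a * F s)
          + Real.exp (-c * s) * (a * (p s * Real.exp (c * s))))) s :=
      (hgd s).congr_of_eventuallyEq hev
    rw [hpd.deriv]
    have hgs : (c / b) * (Real.exp (-c * s) * (1 + a * F s)) = p s := (hpg s hs).symm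
    have hexp : Real.exp (-c * s) * Real.exp (c * s) = 1 := by
      rw [← Real.exp_add, neg_mul, neg_add_cancel, Real.exp_zero]
    have key : (c / b) * ((Real.exp (-c * s) * (-c)) * (1 + a * F s)
          + Real.exp (-c * s) * (a * (p s * Real.exp (c * s))))
        = -c * p s + (a * c / b) * p s := by
      have expand : (c / b) * ((Real.exp (-c * s) * (-c)) * (1 + a * F s)
          + Real.exp (-c * s) * (a * (p s * Real.exp (c * s))))
          = -c * ((c / b) * (Real.exp (-c * s) * (1 + a * F s)))
            + (a * c / b) * p s * (Real.exp (-c * s) * Real.exp (c * s)) := by ring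
      rw [expand, hexp, hgs]; ring
    rw [key, hCval]
    have hco : -c + a * c / b = -((m : ℝ) * ((m : ℝ) + 1) / 2) := by
      rw [hcval, ha, hb]
      field_simp
      ring
    linear_combination p s * hco
  refine ⟨hODE, ?_⟩
  set C : ℝ := ((m + 1).choose 2 : ℝ) with hC
  set h : ℝ → ℝ := fun s => p s * Real.exp (C * s) with hh
  have hhd : ∀ s : ℝ, 0 < s → HasDerivAt h 0 s := by
    intro s hs
    have hpd : HasDerivAt p (deriv p s) s :=
      (hp.differentiable one_ne_zero s).hasDerivAt
    have hEd : HasDerivAt (fun s : ℝ => Real.exp (C * s)) (Real.exp (C * s) * C) s := by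
      simpa [mul_comm] using ((hasDerivAt_id s).const_mul C).exp
    have := hpd.mul hEd
    have hz : deriv p s * Real.exp (C * s) + p s * (Real.exp (C * s) * C) = 0 := by
      linear_combination Real.exp (C * s) * hODE s hs
    rw [hz] at this
    exact this
  have hhc : Continuous h :=
    hpc.mul (Real.continuous_exp.comp (continuous_const.mul continuous_id))
  -- h is constant on (0, ∞)
  have hconst : ∀ s : ℝ, 0 < s → h s = h 0 := by
    intro s hs
    have key : ∀ t : ℝ, 0 < t → t ≤ s → h s = h t := by
      intro t ht hts
      have := constant_of_has_deriv_right_zero (f := h) (a := t) (b := s)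
        (hhc.continuousOn)
        (fun x hx => ((hhd x (lt_of_lt_of_le ht hx.1)).hasDerivWithinAt))
        s ⟨hts, le_rfl⟩
      exact this
    -- take limit t → 0+
    have h1 : Filter.Tendsto h (nhdsWithin 0 (Set.Ioi 0)) (nhds (h 0)) :=
      (hhc.tendsto 0).mono_left nhdsWithin_le_nhds
    have h2 : Filter.Tendsto h (nhdsWithin 0 (Set.Ioi 0)) (nhds (h s)) := by
      have hev : (fun _ : ℝ => h s) =ᶠ[nhdsWithin 0 (Set.Ioi 0)] h := by
        filter_upwards [Ioo_mem_nhdsGT_of_mem (Set.left_mem_Ico.2 hs)] with t ht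
        exact key t ht.1 ht.2.le
      exact Filter.Tendsto.congr' hev tendsto_const_nhds
    have hne : (nhdsWithin (0:ℝ) (Set.Ioi 0)).NeBot := by infer_instance
    exact tendsto_nhds_unique h2 h1
  intro s hs
  rcases eq_or_lt_of_le hs with rfl | hs'
  · simp
  · have hcs := hconst s hs'
    rw [hh] at hcs
    simp only [mul_zero, Real.exp_zero, mul_one] at hcs
    have h1 : p 0 = p s * Real.exp (C * s) := hcs.symm
    rw [h1, neg_mul, Real.exp_neg]
    field_simp
end
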